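/- Let λ > 0 be irrational and a > 0 real. Then for every non-empty open interval I ⊆ (a, ∞), the set {s - t·λ : s, t ∈ ℕ} intersects log(I) in infinitely many points with t arbitrarily large and s ≥ 0. -/
import Mathlib

private lemma t_unique_aux (lam : ℝ) (hlam : Irrational lam) {s t s' t' : ℕ}
    (h : (s : ℝ) - (t : ℝ) * lam = (s' : ℝ) - (t' : ℝ) * lam) : t = t' := by
  by_contra hne
  have hne' : (t : ℝ) - (t' : ℝ) ≠ 0 := by
    intro h0
    exact hne (by exact_mod_cast sub_eq_zero.mp h0)
  refine hlam ⟨((s : ℚ) - s') / ((t : ℚ) - t'), ?_⟩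
  push_cast
  rw [div_eq_iff hne']
  linarith

private lemma exists_small_aux (lam : ℝ) (hlam : Irrational lam) {ε : ℝ}
    (hε0 : 0 < ε) (hε1 : ε < 1) :
    ∃ P Q : ℤ, 0 < Q ∧ (P : ℝ) - Q * lam ≠ 0 ∧ |(P : ℝ) - Q * lam| < ε := by
  set S : AddSubgroup ℝ :=
    { carrier := {x | ∃ p q : ℤ, x = (p : ℝ) + (q : ℝ) * lam}
      zero_mem' := ⟨0, 0, by simp⟩
      add_mem' := by
        rintro x y ⟨p, q, rfl⟩ ⟨p', q', rfl⟩
        exact ⟨p + p', q + q', by push_cast; ring⟩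
      neg_mem' := by
        rintro x ⟨p, q, rfl⟩
        exact ⟨-p, -q, by push_cast; ring⟩ } with hS
  have hmem : ∀ x : ℝ, x ∈ S ↔ ∃ p q : ℤ, x = (p : ℝ) + (q : ℝ) * lam := fun _ => Iff.rfl
  rcases S.dense_or_cyclic with hd | ⟨g, hg⟩
  · -- dense case
    obtain ⟨x, hxS, hx⟩ := hd.exists_mem_open isOpen_Ioo
      (⟨ε / 2, by constructor <;> linarith⟩ : Set.Nonempty (Set.Ioo 0 ε))
    obtain ⟨p, q, rfl⟩ := (hmem x).mp hxS
    obtain ⟨hx0, hxε⟩ := hx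
    have hq : q ≠ 0 := by
      rintro rfl
      simp only [Int.cast_zero, zero_mul, add_zero] at hx0 hxε
      have h1 : 0 < p := by exact_mod_cast hx0
      have h3 : p < 1 := by exact_mod_cast hxε.trans hε1
      omega
    rcases lt_or_gt_of_ne hq with hqneg | hqpos
    · refine ⟨p, -q, by omega, ?_, ?_⟩
      · push_cast
        intro h0
        apply ne_of_gt hx0
        linarith
      · push_cast
        rw [abs_of_pos (by linarith)]
        linarith
    · refine ⟨-p, q, hqpos, ?_, ?_⟩
      · push_cast
        intro h0
        apply ne_of_gt hx0
        linarith
      · push_cast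
        rw [abs_of_neg (by linarith)]
        linarith
  · -- cyclic case: contradiction with irrationality
    exfalso
    have h1 : (1 : ℝ) ∈ S := ⟨1, 0, by simp⟩
    have h2 : lam ∈ S := ⟨0, 1, by simp⟩
    rw [hg] at h1 h2
    obtain ⟨n, hn⟩ := AddSubgroup.mem_closure_singleton.mp h1
    obtain ⟨m, hm⟩ := AddSubgroup.mem_closure_singleton.mp h2
    rw [zsmul_eq_mul] at hn hm
    have hn0 : (n : ℝ) ≠ 0 := by
      intro h0
      rw [h0, zero_mul] at hn
      norm_num at hn
    refine hlam ⟨(m : ℚ) / (n : ℚ), ?_⟩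
    push_cast
    rw [div_eq_iff hn0]
    linear_combination (n : ℝ) * hm - (m : ℝ) * hn

set_option maxHeartbeats 1000000 in
private lemma step_aux (lam : ℝ) (hlampos : 0 < lam) {c₁ c₂ : ℝ} (hc : c₁ < c₂)
    (P Q : ℤ) (hQ : 0 < Q) (hne : (P : ℝ) - Q * lam ≠ 0)
    (habs : |(P : ℝ) - Q * lam| < c₂ - c₁) (t₀ : ℕ) :
    ∃ S T : ℤ, 0 ≤ S ∧ (t₀ : ℤ) < T ∧ ((S : ℝ) - (T : ℝ) * lam) ∈ Set.Ioo c₁ c₂ := by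
  set h : ℝ := (P : ℝ) - Q * lam with hh
  rcases hne.lt_or_gt with hneg | hpos
  · -- h < 0
    set h' : ℝ := -h with hh'
    have hpos' : 0 < h' := by simp only [hh']; linarith
    have hlt : h' < c₂ - c₁ := by
      have := abs_of_neg hneg
      rw [this] at habs
      linarith
    obtain ⟨M, hM⟩ := exists_nat_gt (max c₂ (h' * max (-c₁ / lam) (t₀ : ℝ) + c₂))
    have hM1 : c₂ < (M : ℝ) := lt_of_le_of_lt (le_max_left _ _) hM
    have hM2 : h' * max (-c₁ / lam) (t₀ : ℝ) + c₂ < (M : ℝ) :=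
      lt_of_le_of_lt (le_max_right _ _) hM
    obtain ⟨n, hn1, hn2⟩ : ∃ n : ℤ, ((M : ℝ) - c₂) / h' < n ∧ (n : ℝ) - 1 ≤ ((M : ℝ) - c₂) / h' :=
      ⟨⌊((M : ℝ) - c₂) / h'⌋ + 1,
        by push_cast; exact Int.lt_floor_add_one _,
        by push_cast; simpa using Int.floor_le (((M : ℝ) - c₂) / h')⟩
    have hx1 : (M : ℝ) - c₂ < n * h' := (div_lt_iff₀ hpos').mp hn1
    have hx2 : (n : ℝ) * h' ≤ (M : ℝ) - c₂ + h' := by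
      have h0 : ((n : ℝ) - 1) * h' ≤ (M : ℝ) - c₂ := (le_div_iff₀ hpos').mp hn2
      nlinarith
    have hmax : max (-c₁ / lam) (t₀ : ℝ) < (n : ℝ) := by
      have h0 : max (-c₁ / lam) (t₀ : ℝ) < ((M : ℝ) - c₂) / h' := by
        rw [lt_div_iff₀ hpos']
        nlinarith
      linarith
    have hnt : (t₀ : ℝ) < (n : ℝ) := lt_of_le_of_lt (le_max_right _ _) hmax
    have hnl : -c₁ < (n : ℝ) * lam := by
      have := lt_of_le_of_lt (le_max_left _ _) hmax
      rwa [div_lt_iff₀ hlampos] at this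
    have hn0 : (1 : ℤ) ≤ n := by
      have h0 : (0 : ℝ) < ((M : ℝ) - c₂) / h' := div_pos (by linarith) hpos'
      have : (0 : ℝ) < (n : ℝ) := by linarith
      exact_mod_cast this
    have hxg : c₁ < (M : ℝ) + n * h := by
      have h0 : (n : ℝ) * h' < (M : ℝ) - c₁ := by linarith
      simp only [hh'] at h0; nlinarith
    have hxl : (M : ℝ) + n * h < c₂ := by
      have h0 : (M : ℝ) - c₂ < n * h' := hx1
      simp only [hh'] at h0; nlinarith
    have hT : (n : ℝ) ≤ ((n * Q : ℤ) : ℝ) := by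
      have : n ≤ n * Q := le_mul_of_one_le_right (by omega) hQ
      exact_mod_cast this
    have hSx : ((M + n * P : ℤ) : ℝ) = ((M : ℝ) + n * h) + ((n * Q : ℤ) : ℝ) * lam := by
      push_cast
      rw [hh]
      ring
    refine ⟨M + n * P, n * Q, ?_, ?_, ?_⟩
    · have hposS : (0 : ℝ) < ((M + n * P : ℤ) : ℝ) := by
        rw [hSx]
        nlinarith
      exact_mod_cast hposS.le
    · have h0 : (t₀ : ℤ) < n := by exact_mod_cast hnt
      calc (t₀ : ℤ) < n := h0
      _ ≤ n * Q := le_mul_of_one_le_right (by omega) hQ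
    · have hval : ((M + n * P : ℤ) : ℝ) - ((n * Q : ℤ) : ℝ) * lam = (M : ℝ) + n * h := by
        rw [hSx]; ring
      rw [hval]
      exact ⟨hxg, hxl⟩
  · -- h > 0
    have hlt : h < c₂ - c₁ := by
      have := abs_of_pos hpos
      rw [this] at habs
      linarith
    obtain ⟨M, hM⟩ := exists_nat_gt (max (-c₁) (h * max (-c₁ / lam) (t₀ : ℝ) - c₁))
    have hM1 : -c₁ < (M : ℝ) := lt_of_le_of_lt (le_max_left _ _) hM
    have hM2 : h * max (-c₁ / lam) (t₀ : ℝ) - c₁ < (M : ℝ) :=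
      lt_of_le_of_lt (le_max_right _ _) hM
    obtain ⟨n, hn1, hn2⟩ : ∃ n : ℤ, (c₁ + (M : ℝ)) / h < n ∧ (n : ℝ) - 1 ≤ (c₁ + (M : ℝ)) / h :=
      ⟨⌊(c₁ + (M : ℝ)) / h⌋ + 1,
        by push_cast; exact Int.lt_floor_add_one _,
        by push_cast; simpa using Int.floor_le ((c₁ + (M : ℝ)) / h)⟩
    have hx1 : c₁ + (M : ℝ) < n * h := (div_lt_iff₀ hpos).mp hn1
    have hx2 : (n : ℝ) * h ≤ c₁ + (M : ℝ) + h := by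
      have h0 : ((n : ℝ) - 1) * h ≤ c₁ + (M : ℝ) := (le_div_iff₀ hpos).mp hn2
      nlinarith
    have hmax : max (-c₁ / lam) (t₀ : ℝ) < (n : ℝ) := by
      have h0 : max (-c₁ / lam) (t₀ : ℝ) < (c₁ + (M : ℝ)) / h := by
        rw [lt_div_iff₀ hpos]
        nlinarith
      linarith
    have hnt : (t₀ : ℝ) < (n : ℝ) := lt_of_le_of_lt (le_max_right _ _) hmax
    have hnl : -c₁ < (n : ℝ) * lam := by
      have := lt_of_le_of_lt (le_max_left _ _) hmax
      rwa [div_lt_iff₀ hlampos] at this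
    have hn0 : (1 : ℤ) ≤ n := by
      have h01 : (0 : ℝ) < (c₁ + (M : ℝ)) / h := div_pos (by linarith) hpos
      have : (0 : ℝ) < (n : ℝ) := by linarith
      exact_mod_cast this
    have hxg : c₁ < (n : ℝ) * h - M := by linarith
    have hxl : (n : ℝ) * h - M < c₂ := by linarith
    have hT : (n : ℝ) ≤ ((n * Q : ℤ) : ℝ) := by
      have : n ≤ n * Q := le_mul_of_one_le_right (by omega) hQ
      exact_mod_cast this
    have hSx : ((n * P - M : ℤ) : ℝ) = ((n : ℝ) * h - M) + ((n * Q : ℤ) : ℝ) * lam := by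
      push_cast
      rw [hh]
      ring
    refine ⟨n * P - M, n * Q, ?_, ?_, ?_⟩
    · have hposS : (0 : ℝ) < ((n * P - M : ℤ) : ℝ) := by
        rw [hSx]
        nlinarith
      exact_mod_cast hposS.le
    · have h0 : (t₀ : ℤ) < n := by exact_mod_cast hnt
      calc (t₀ : ℤ) < n := h0
      _ ≤ n * Q := le_mul_of_one_le_right (by omega) hQ
    · have hval : ((n * P - M : ℤ) : ℝ) - ((n * Q : ℤ) : ℝ) * lam = (n : ℝ) * h - M := by
        rw [hSx]; ring
      rw [hval]
      exact ⟨hxg, hxl⟩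

/-- For irrational `λ > 0` and `a > 0`, for every non-empty open interval
`I = (b₁, b₂) ⊆ (a, ∞)`, the set `{s - t·λ : s, t ∈ ℕ}` meets `log(I)` in
infinitely many points, with `t` arbitrarily large (and `s ≥ 0`). -/
theorem nat_comb_meets_log_interval (lam : ℝ) (hlam : Irrational lam)
    (hlampos : 0 < lam) (a : ℝ) (ha : 0 < a)
    (b₁ b₂ : ℝ) (hab : a ≤ b₁) (hb : b₁ < b₂) :
    ({x : ℝ | ∃ s t : ℕ, x = (s : ℝ) - (t : ℝ) * lam ∧
        x ∈ Real.log '' Set.Ioo b₁ b₂}.Infinite) ∧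
    ∀ t₀ : ℕ, ∃ s t : ℕ, t₀ < t ∧
      ((s : ℝ) - (t : ℝ) * lam) ∈ Real.log '' Set.Ioo b₁ b₂ := by
  have hb₁ : 0 < b₁ := lt_of_lt_of_le ha hab
  have hb₂ : 0 < b₂ := lt_trans hb₁ hb
  set c₁ : ℝ := Real.log b₁ with hc₁
  set c₂ : ℝ := Real.log b₂ with hc₂
  have hc : c₁ < c₂ := Real.log_lt_log hb₁ hb
  have himg : ∀ x ∈ Set.Ioo c₁ c₂, x ∈ Real.log '' Set.Ioo b₁ b₂ := by
    intro x hx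
    refine ⟨Real.exp x, ⟨?_, ?_⟩, Real.log_exp x⟩
    · rw [← Real.exp_log hb₁]
      exact Real.exp_lt_exp.mpr hx.1
    · rw [← Real.exp_log hb₂]
      exact Real.exp_lt_exp.mpr hx.2
  set ε : ℝ := min (1 / 2) ((c₂ - c₁) / 2) with hε
  have hε0 : 0 < ε := lt_min (by norm_num) (by linarith)
  have hε1 : ε < 1 := lt_of_le_of_lt (min_le_left _ _) (by norm_num)
  obtain ⟨P, Q, hQ, hne, habs⟩ := exists_small_aux lam hlam hε0 hε1
  have habs' : |(P : ℝ) - Q * lam| < c₂ - c₁ :=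
    lt_of_lt_of_le habs (le_trans (min_le_right _ _) (by linarith))
  have key : ∀ t₀ : ℕ, ∃ s t : ℕ, t₀ < t ∧
      ((s : ℝ) - (t : ℝ) * lam) ∈ Real.log '' Set.Ioo b₁ b₂ := by
    intro t₀
    obtain ⟨S, T, hS, hT, hx⟩ := step_aux lam hlampos hc P Q hQ hne habs' t₀
    refine ⟨S.toNat, T.toNat, by omega, ?_⟩
    have hScast : ((S.toNat : ℕ) : ℝ) = (S : ℝ) := by
      exact_mod_cast congrArg (Int.cast : ℤ → ℝ) (Int.toNat_of_nonneg hS)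
    have hT0 : 0 ≤ T := by omega
    have hTcast : ((T.toNat : ℕ) : ℝ) = (T : ℝ) := by
      exact_mod_cast congrArg (Int.cast : ℤ → ℝ) (Int.toNat_of_nonneg hT0)
    rw [hScast, hTcast]
    exact himg _ hx
  refine ⟨?_, key⟩
  choose f g h1 h2 using key
  set w : ℕ → ℕ := fun n => g^[n] 0 with hw
  have hwsucc : ∀ n, w (n + 1) = g (w n) := by
    intro n
    simp [hw, Function.iterate_succ_apply']
  set v : ℕ → ℕ := fun n => g (w n) with hv
  have hmono : StrictMono v := by
    apply strictMono_nat_of_lt_succ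
    intro n
    have h0 : v (n + 1) = g (v n) := by
      show g (w (n + 1)) = g (g (w n))
      rw [hwsucc]
    rw [h0]
    exact h1 (v n)
  apply Set.infinite_of_injective_forall_mem
    (f := fun n : ℕ => (f (w n) : ℝ) - (g (w n) : ℝ) * lam)
  · intro n m hnm
    have ht : g (w n) = g (w m) := t_unique_aux lam hlam hnm
    exact hmono.injective ht
  · intro n
    exact ⟨f (w n), g (w n), rfl, h2 (w n)⟩
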